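/- Let G be a connected half-transitive multigraph with bipartition V₁ ∪ V₂ and δ(G) ≥ 2μ(G). If G is not λ'-optimal, then any two distinct λ'-atoms A and B of G satisfy |A| = |B| ≥ 3 and A ∩ B = ∅. -/

import Mathlib

/-- A multigraph: multiple edges allowed (recorded as edge multiplicities), no loops. -/
structure Multigraph (V : Type*) where
  mult : V → V → ℕ
  symm : ∀ u v, mult u v = mult v u
  loopless : ∀ v, mult v v = 0

namespace Multigraph

variable {V : Type*}

/-- Adjacency: at least one edge between `u` and `v`. -/
def Adj (G : Multigraph V) (u v : V) : Prop := 0 < G.mult u v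

instance (G : Multigraph V) (v : V) : DecidablePred (G.Adj v) :=
  fun u => inferInstanceAs (Decidable (0 < G.mult v u))

/-- Reachability by walks. -/
def Reachable (G : Multigraph V) : V → V → Prop := Relation.ReflTransGen G.Adj

/-- A multigraph is connected if it is nonempty and every two vertices are joined by a walk. -/
def Connected (G : Multigraph V) : Prop := Nonempty V ∧ ∀ u v, G.Reachable u v

/-- An automorphism of a multigraph: a permutation preserving all edge multiplicities. -/
def Aut (G : Multigraph V) : Type _ :=
  {e : Equiv.Perm V // ∀ u v, G.mult (e u) (e v) = G.mult u v}

/-- A set of edges of `G`, given by sub-multiplicities. -/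
structure EdgeSub (G : Multigraph V) where
  f : V → V → ℕ
  symm : ∀ u v, f u v = f v u
  le : ∀ u v, f u v ≤ G.mult u v

/-- The multigraph obtained by deleting the edge set `F`. -/
def deleteEdges (G : Multigraph V) (F : G.EdgeSub) : Multigraph V where
  mult u v := G.mult u v - F.f u v
  symm u v := by try dsimp only
                 rw [G.symm u v, F.symm u v]
  loopless v := by simp [G.loopless v]

/-- `F` is an edge-cut if removing it disconnects `G`. -/
def IsEdgeCut (G : Multigraph V) (F : G.EdgeSub) : Prop := ¬ (G.deleteEdges F).Connected

/-- `F` is a restricted edge-cut if removing it disconnects `G` and leaves no isolated vertex. -/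
def IsRestrictedEdgeCut (G : Multigraph V) (F : G.EdgeSub) : Prop :=
  G.IsEdgeCut F ∧ ∀ v, ∃ u, (G.deleteEdges F).Adj v u

/-- `G` is bipartite with parts `V₁`, `V₂`. -/
def IsBipartition [DecidableEq V] [Fintype V] (G : Multigraph V) (V₁ V₂ : Finset V) : Prop :=
  Disjoint V₁ V₂ ∧ V₁ ∪ V₂ = Finset.univ ∧ ∀ u v, G.Adj u v → (u ∈ V₁ ↔ v ∈ V₂)

/-- A bipartite multigraph is half-transitive if `Aut G` is transitive on each part. -/
def IsHalfTransitive [DecidableEq V] [Fintype V] (G : Multigraph V) (V₁ V₂ : Finset V) : Prop :=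
  G.IsBipartition V₁ V₂ ∧
  (∀ u ∈ V₁, ∀ v ∈ V₁, ∃ e : G.Aut, e.1 u = v) ∧
  (∀ u ∈ V₂, ∀ v ∈ V₂, ∃ e : G.Aut, e.1 u = v)

/-- An imprimitive block for `Aut G`. -/
def IsImprimitiveBlock [DecidableEq V] (G : Multigraph V) (A : Finset V) [Fintype V] : Prop :=
  A.Nonempty ∧ A ≠ Finset.univ ∧
  ∀ e : G.Aut, A.image e.1 = A ∨ Disjoint (A.image e.1) A

/-- The induced sub-multigraph on a vertex set `S`. -/
def induce (G : Multigraph V) (S : Finset V) : Multigraph {x // x ∈ S} where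
  mult a b := G.mult a.1 b.1
  symm a b := G.symm a.1 b.1
  loopless a := G.loopless a.1

section Fin

variable [Fintype V] [DecidableEq V]

/-- The degree of a vertex (counting multiplicities). -/
def degree (G : Multigraph V) (v : V) : ℕ := ∑ u, G.mult v u

/-- The minimum degree `δ(G)`. -/
noncomputable def minDegree (G : Multigraph V) : ℕ := sInf {n | ∃ v, G.degree v = n}

/-- The maximum edge multiplicity `μ(G)`. -/
def maxMult (G : Multigraph V) : ℕ := Finset.univ.sup fun p : V × V => G.mult p.1 p.2

/-- `d(A)`: the number of edges between `A` and its complement. -/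
def cut (G : Multigraph V) (A : Finset V) : ℕ := ∑ u ∈ A, ∑ v ∈ Aᶜ, G.mult u v

/-- The number of edges in an edge set. -/
def EdgeSub.card {G : Multigraph V} (F : G.EdgeSub) : ℕ := (∑ u, ∑ v, F.f u v) / 2

/-- The edge-boundary `N(A)` of a vertex set `A`, as an edge set. -/
def boundary (G : Multigraph V) (A : Finset V) : G.EdgeSub where
  f u v := if (u ∈ A ∧ v ∉ A) ∨ (v ∈ A ∧ u ∉ A) then G.mult u v else 0
  symm u v := by
    try dsimp only
    by_cases h1 : u ∈ A <;> by_cases h2 : v ∈ A <;> simp [h1, h2, G.symm u v]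
  le u v := by try dsimp only
               split_ifs <;> simp

/-- The edge-connectivity `λ(G)`. -/
noncomputable def edgeConn (G : Multigraph V) : ℕ :=
  sInf {n | ∃ F : G.EdgeSub, G.IsEdgeCut F ∧ F.card = n}

/-- The restricted edge-connectivity `λ'(G)`. -/
noncomputable def rEdgeConn (G : Multigraph V) : ℕ :=
  sInf {n | ∃ F : G.EdgeSub, G.IsRestrictedEdgeCut F ∧ F.card = n}

/-- The minimum edge degree `ξ(G) = min {d(u)+d(v)-2μ(uv) : uv ∈ E}`. -/
noncomputable def minEdgeDegree (G : Multigraph V) : ℕ :=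
  sInf {n | ∃ u v, G.Adj u v ∧ n = G.degree u + G.degree v - 2 * G.mult u v}

/-- A `λ`-fragment: a vertex set whose edge-boundary is a minimum edge-cut. -/
def IsFragment (G : Multigraph V) (A : Finset V) : Prop :=
  A.Nonempty ∧ Aᶜ.Nonempty ∧ G.IsEdgeCut (G.boundary A) ∧ G.cut A = G.edgeConn

/-- A `λ`-atom: a `λ`-fragment of minimum cardinality. -/
def IsAtom (G : Multigraph V) (A : Finset V) : Prop :=
  G.IsFragment A ∧ ∀ B : Finset V, G.IsFragment B → A.card ≤ B.card

/-- A strict `λ`-fragment: a `λ`-fragment `C` with `2 ≤ |C| ≤ |V| - 2`. -/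
def IsStrictFragment (G : Multigraph V) (A : Finset V) : Prop :=
  G.IsFragment A ∧ 2 ≤ A.card ∧ A.card ≤ Fintype.card V - 2

/-- A `λ`-superatom: a strict `λ`-fragment of minimum cardinality. -/
def IsSuperAtom (G : Multigraph V) (A : Finset V) : Prop :=
  G.IsStrictFragment A ∧ ∀ B : Finset V, G.IsStrictFragment B → A.card ≤ B.card

/-- A `λ'`-fragment: a vertex set whose edge-boundary is a minimum restricted edge-cut. -/
def IsRFragment (G : Multigraph V) (A : Finset V) : Prop :=
  G.IsRestrictedEdgeCut (G.boundary A) ∧ G.cut A = G.rEdgeConn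

/-- A `λ'`-atom: a `λ'`-fragment of minimum cardinality. -/
def IsRAtom (G : Multigraph V) (A : Finset V) : Prop :=
  G.IsRFragment A ∧ ∀ B : Finset V, G.IsRFragment B → A.card ≤ B.card

/-- `G` is super edge-connected if every minimum edge-cut is the set of all edges
incident with some vertex. -/
def IsSuperEdgeConnected (G : Multigraph V) : Prop :=
  ∀ F : G.EdgeSub, G.IsEdgeCut F → F.card = G.edgeConn →
    ∃ v : V, ∀ u w : V, F.f u w = if u = v ∨ w = v then G.mult u w else 0

end Fin

end Multigraph

variable {V : Type*} [Fintype V] [DecidableEq V]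

open Multigraph

namespace Multigraph

variable {V : Type*} [Fintype V] [DecidableEq V] {G : Multigraph V}

/-- Sum of multiplicities from `u` into `T`. -/
def nm (G : Multigraph V) (u : V) (T : Finset V) : ℕ := ∑ v ∈ T, G.mult u v

lemma nm_symm (u : V) (T : Finset V) : G.nm u T = ∑ v ∈ T, G.mult v u :=
  Finset.sum_congr rfl fun v _ => G.symm u v

lemma cut_eq (S : Finset V) : G.cut S = ∑ u ∈ S, G.nm u Sᶜ := rfl

lemma degree_eq (u : V) : G.degree u = G.nm u Finset.univ := rfl

lemma exists_adj_of_nm_pos {u : V} {T : Finset V} (h : 0 < G.nm u T) :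
    ∃ v ∈ T, G.Adj u v := by
  by_contra hc
  push_neg at hc
  have : G.nm u T = 0 := Finset.sum_eq_zero fun v hv => Nat.le_zero.mp (not_lt.mp (hc v hv))
  omega

lemma nm_le_of_support {u : V} {T U : Finset V} (h : ∀ v ∈ T, v ∉ U → G.mult u v = 0) :
    G.nm u T ≤ G.nm u U := by
  have h1 : G.nm u T = ∑ v ∈ T ∩ U, G.mult u v :=
    (Finset.sum_subset Finset.inter_subset_left
      (fun v hv hnv => h v hv (fun hU => hnv (Finset.mem_inter.mpr ⟨hv, hU⟩)))).symm
  rw [h1]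
  exact Finset.sum_le_sum_of_subset Finset.inter_subset_right

lemma cut_compl (S : Finset V) : G.cut Sᶜ = G.cut S := by
  unfold cut
  rw [compl_compl, Finset.sum_comm]
  exact Finset.sum_congr rfl fun u _ => Finset.sum_congr rfl fun v _ => G.symm v u

lemma cut_erase {S : Finset V} {u : V} (h : u ∈ S) :
    G.cut (S.erase u) + G.nm u Sᶜ = G.cut S + G.nm u (S.erase u) := by
  have hunotc : u ∉ Sᶜ := by simp [h]
  have h1 : G.cut (S.erase u) =
      (∑ x ∈ S.erase u, G.mult x u) + ∑ x ∈ S.erase u, G.nm x Sᶜ := by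
    rw [cut_eq, ← Finset.sum_add_distrib]
    refine Finset.sum_congr rfl fun x hx => ?_
    rw [Finset.compl_erase, nm, Finset.sum_insert hunotc, nm]
  have h2 : (∑ x ∈ S.erase u, G.nm x Sᶜ) + G.nm u Sᶜ = G.cut S := by
    rw [cut_eq]; exact Finset.sum_erase_add _ _ h
  have h3 : (∑ x ∈ S.erase u, G.mult x u) = G.nm u (S.erase u) := (nm_symm u _).symm
  omega

lemma cut_insert {S : Finset V} {u : V} (h : u ∉ S) :
    G.cut (insert u S) + G.nm u S = G.cut S + G.nm u (Sᶜ.erase u) := by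
  have := cut_erase (G := G) (S := insert u S) (u := u) (Finset.mem_insert_self u S)
  rw [Finset.erase_insert h, Finset.compl_insert] at this
  omega

set_option linter.unusedSectionVars false

lemma boundary_del_adj {S : Finset V} {u v : V} :
    (G.deleteEdges (G.boundary S)).Adj u v ↔ G.Adj u v ∧ ((u ∈ S) ↔ (v ∈ S)) := by
  show 0 < G.mult u v - (if (u ∈ S ∧ v ∉ S) ∨ (v ∈ S ∧ u ∉ S) then G.mult u v else 0) ↔ _
  by_cases hu : u ∈ S <;> by_cases hv : v ∈ S <;> simp [Adj, hu, hv] <;> omega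

lemma reach_side {S : Finset V} {a x : V}
    (h : (G.deleteEdges (G.boundary S)).Reachable a x) (ha : a ∈ S) : x ∈ S := by
  induction h with
  | refl => exact ha
  | tail _ hadj ih => exact ((boundary_del_adj.mp hadj).2).mp ih

lemma not_cut_of_const {S : Finset V} (hG : G.Connected)
    (hall : ∀ x y : V, (x ∈ S) ↔ (y ∈ S)) : ¬ G.IsEdgeCut (G.boundary S) := by
  intro hcut
  exact hcut ⟨hG.1, fun a b =>
    Relation.ReflTransGen.mono (fun x y hxy => boundary_del_adj.mpr ⟨hxy, hall x y⟩) _ _ (hG.2 a b)⟩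

lemma restricted_boundary_iff (hG : G.Connected) (S : Finset V) :
    G.IsRestrictedEdgeCut (G.boundary S) ↔
      S.Nonempty ∧ Sᶜ.Nonempty ∧ (∀ v ∈ S, ∃ u ∈ S, G.Adj v u) ∧
        (∀ v, v ∉ S → ∃ u, u ∉ S ∧ G.Adj v u) := by
  constructor
  · rintro ⟨hcut, hiso⟩
    have hne : S.Nonempty := by
      rcases S.eq_empty_or_nonempty with h | h
      · exact absurd hcut (not_cut_of_const hG (by subst h; simp))
      · exact h
    have hcne : Sᶜ.Nonempty := by
      by_contra h
      rw [Finset.not_nonempty_iff_eq_empty, Finset.compl_eq_empty_iff] at h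
      exact (not_cut_of_const hG (by subst h; simp)) hcut
    refine ⟨hne, hcne, ?_, ?_⟩
    · intro v hv
      obtain ⟨u, hu⟩ := hiso v
      obtain ⟨hadj, hiff⟩ := boundary_del_adj.mp hu
      exact ⟨u, hiff.mp hv, hadj⟩
    · intro v hv
      obtain ⟨u, hu⟩ := hiso v
      obtain ⟨hadj, hiff⟩ := boundary_del_adj.mp hu
      exact ⟨u, fun h => hv (hiff.mpr h), hadj⟩
  · rintro ⟨⟨a, ha⟩, ⟨b, hb⟩, hin, hout⟩
    constructor
    · intro hconn
      exact (Finset.mem_compl.mp hb) (reach_side (hconn.2 a b) ha)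
    · intro v
      by_cases hv : v ∈ S
      · obtain ⟨u, hu, hadj⟩ := hin v hv
        exact ⟨u, boundary_del_adj.mpr ⟨hadj, iff_of_true hv hu⟩⟩
      · obtain ⟨u, hu, hadj⟩ := hout v hv
        exact ⟨u, boundary_del_adj.mpr ⟨hadj, iff_of_false hv hu⟩⟩

lemma boundary_card (S : Finset V) : (G.boundary S).card = G.cut S := by
  have key : ∑ u, ∑ v, (G.boundary S).f u v = 2 * G.cut S := by
    have hf : ∀ u v : V, (G.boundary S).f u v =
        if (u ∈ S ∧ v ∉ S) ∨ (v ∈ S ∧ u ∉ S) then G.mult u v else 0 := fun _ _ => rfl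
    have h1 : ∀ u ∈ S, (∑ v, (G.boundary S).f u v) = G.nm u Sᶜ := by
      intro u hu
      have : ∀ v : V, (G.boundary S).f u v = if v ∈ Sᶜ then G.mult u v else 0 := by
        intro v
        rw [hf]
        by_cases hv : v ∈ S <;> simp [hu, hv]
      rw [Finset.sum_congr rfl fun v _ => this v, Finset.sum_ite_mem, Finset.univ_inter, nm]
    have h2 : ∀ u ∈ Sᶜ, (∑ v, (G.boundary S).f u v) = G.nm u S := by
      intro u hu
      rw [Finset.mem_compl] at hu
      have : ∀ v : V, (G.boundary S).f u v = if v ∈ S then G.mult u v else 0 := by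
        intro v
        rw [hf]
        by_cases hv : v ∈ S <;> simp [hu, hv]
      rw [Finset.sum_congr rfl fun v _ => this v, Finset.sum_ite_mem, Finset.univ_inter, nm]
    rw [← Finset.sum_add_sum_compl S (fun u => ∑ v, (G.boundary S).f u v),
      Finset.sum_congr rfl h1, Finset.sum_congr rfl h2]
    have h3 : ∑ u ∈ Sᶜ, G.nm u S = G.cut S := by
      have := cut_compl (G := G) S
      rw [cut_eq, compl_compl] at this
      exact this
    rw [h3, ← cut_eq]
    omega
  show (∑ u, ∑ v, (G.boundary S).f u v) / 2 = _
  rw [key]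
  omega

lemma rEdgeConn_le_cut {S : Finset V} (h : G.IsRestrictedEdgeCut (G.boundary S)) :
    G.rEdgeConn ≤ G.cut S :=
  Nat.sInf_le ⟨G.boundary S, h, boundary_card S⟩

lemma rfrag_compl (hG : G.Connected) {S : Finset V} (h : G.IsRFragment S) :
    G.IsRFragment Sᶜ := by
  obtain ⟨hne, hcne, hin, hout⟩ := (restricted_boundary_iff hG S).mp h.1
  constructor
  · rw [restricted_boundary_iff hG]
    refine ⟨hcne, by rwa [compl_compl], ?_, ?_⟩
    · intro v hv
      obtain ⟨u, hu, hadj⟩ := hout v (Finset.mem_compl.mp hv)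
      exact ⟨u, Finset.mem_compl.mpr hu, hadj⟩
    · intro v hv
      rw [Finset.mem_compl, not_not] at hv
      obtain ⟨u, hu, hadj⟩ := hin v hv
      exact ⟨u, by simp [hu], hadj⟩
  · rw [cut_compl]; exact h.2

lemma atom_strict {A : Finset V} (hA : G.IsRAtom A) {S : Finset V}
    (hres : G.IsRestrictedEdgeCut (G.boundary S)) (hcard : S.card < A.card) :
    G.cut A + 1 ≤ G.cut S := by
  have h1 : G.rEdgeConn ≤ G.cut S := rEdgeConn_le_cut hres
  have h2 : G.cut S ≠ G.rEdgeConn := fun hEq => absurd (hA.2 S ⟨hres, hEq⟩) (by omega)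
  have h3 : G.cut A = G.rEdgeConn := hA.1.2
  omega

lemma cross_sum (S : Finset V) :
    ∑ u, ∑ v, (if (u ∈ S) ↔ (v ∈ S) then 0 else G.mult u v) = 2 * G.cut S := by
  have h1 : ∀ u ∈ S, (∑ v, if (u ∈ S) ↔ (v ∈ S) then 0 else G.mult u v) = G.nm u Sᶜ := by
    intro u hu
    have : ∀ v : V, (if (u ∈ S) ↔ (v ∈ S) then 0 else G.mult u v)
        = if v ∈ Sᶜ then G.mult u v else 0 := by
      intro v; by_cases hv : v ∈ S <;> simp [hu, hv]
    rw [Finset.sum_congr rfl fun v _ => this v, Finset.sum_ite_mem, Finset.univ_inter, nm]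
  have h2 : ∀ u ∈ Sᶜ, (∑ v, if (u ∈ S) ↔ (v ∈ S) then 0 else G.mult u v) = G.nm u S := by
    intro u hu
    rw [Finset.mem_compl] at hu
    have : ∀ v : V, (if (u ∈ S) ↔ (v ∈ S) then 0 else G.mult u v)
        = if v ∈ S then G.mult u v else 0 := by
      intro v; by_cases hv : v ∈ S <;> simp [hu, hv]
    rw [Finset.sum_congr rfl fun v _ => this v, Finset.sum_ite_mem, Finset.univ_inter, nm]
  rw [← Finset.sum_add_sum_compl S, Finset.sum_congr rfl h1, Finset.sum_congr rfl h2]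
  have h3 : ∑ u ∈ Sᶜ, G.nm u S = G.cut S := by
    have := cut_compl (G := G) S
    rw [cut_eq, compl_compl] at this
    exact this
  rw [h3, ← cut_eq]
  omega

lemma submod (A B : Finset V) : G.cut (A \ B) + G.cut (B \ A) ≤ G.cut A + G.cut B := by
  have key : ∀ u v : V,
      (if (u ∈ A \ B) ↔ (v ∈ A \ B) then 0 else G.mult u v) +
        (if (u ∈ B \ A) ↔ (v ∈ B \ A) then 0 else G.mult u v) ≤
      (if (u ∈ A) ↔ (v ∈ A) then 0 else G.mult u v) +
        (if (u ∈ B) ↔ (v ∈ B) then 0 else G.mult u v) := by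
    intro u v
    by_cases h1 : u ∈ A <;> by_cases h2 : u ∈ B <;> by_cases h3 : v ∈ A <;>
      by_cases h4 : v ∈ B <;> simp [Finset.mem_sdiff, h1, h2, h3, h4]
  have hsum : (∑ u, ∑ v, ((if (u ∈ A \ B) ↔ (v ∈ A \ B) then 0 else G.mult u v) +
        (if (u ∈ B \ A) ↔ (v ∈ B \ A) then 0 else G.mult u v))) ≤
      ∑ u, ∑ v, ((if (u ∈ A) ↔ (v ∈ A) then 0 else G.mult u v) +
        (if (u ∈ B) ↔ (v ∈ B) then 0 else G.mult u v)) :=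
    Finset.sum_le_sum fun u _ => Finset.sum_le_sum fun v _ => key u v
  simp only [Finset.sum_add_distrib] at hsum
  rw [cross_sum, cross_sum, cross_sum, cross_sum] at hsum
  omega

lemma degree_split {S : Finset V} {u : V} (h : u ∈ S) :
    G.degree u = G.nm u (S.erase u) + G.nm u Sᶜ := by
  rw [degree_eq]
  have h1 : G.nm u Finset.univ = G.nm u S + G.nm u Sᶜ := by
    rw [nm, nm, nm, Finset.sum_add_sum_compl]
  have h2 : G.nm u S = G.nm u (S.erase u) := by
    rw [nm, nm, ← Finset.sum_erase_add S _ h, G.loopless, add_zero]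
  omega

lemma mult_le_maxMult (u v : V) : G.mult u v ≤ G.maxMult :=
  Finset.le_sup (f := fun p : V × V => G.mult p.1 p.2) (Finset.mem_univ (u, v))

lemma minDegree_le (u : V) : G.minDegree ≤ G.degree u := Nat.sInf_le ⟨u, rfl⟩

lemma minEdgeDegree_le {u v : V} (h : G.Adj u v) :
    G.minEdgeDegree ≤ G.degree u + G.degree v - 2 * G.mult u v :=
  Nat.sInf_le ⟨u, v, h, rfl⟩

lemma rfrag_card3 (hG : G.Connected) (hopt : G.rEdgeConn < G.minEdgeDegree)
    {A : Finset V} (hA : G.IsRFragment A) : 3 ≤ A.card := by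
  obtain ⟨hne, hcne, hin, hout⟩ := (restricted_boundary_iff hG A).mp hA.1
  by_contra hcard
  push_neg at hcard
  interval_cases h : A.card
  · exact absurd (Finset.card_eq_zero.mp h ▸ hne) (by simp)
  · obtain ⟨u, hu⟩ := Finset.card_eq_one.mp h
    obtain ⟨v, hv, hadj⟩ := hin u (hu ▸ Finset.mem_singleton_self u)
    rw [hu, Finset.mem_singleton] at hv
    subst hv
    exact absurd hadj (by simp [Adj, G.loopless])
  · obtain ⟨u, v, huv, hA2⟩ := Finset.card_eq_two.mp h
    subst hA2
    obtain ⟨v', hv', hadj'⟩ := hin u (by simp)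
    have hv'v : v' = v := by
      rcases Finset.mem_insert.mp hv' with h | h
      · exact absurd (h ▸ hadj') (by simp [Adj, G.loopless])
      · exact Finset.mem_singleton.mp h
    have hadj : G.Adj u v := by rwa [hv'v] at hadj'
    have heu : ({u, v} : Finset V).erase u = {v} := by
      rw [Finset.erase_insert (by simp [huv])]
    have hev : ({u, v} : Finset V).erase v = {u} := by
      rw [Finset.pair_comm, Finset.erase_insert (by simp [Ne.symm huv])]
    have hdu : G.degree u = G.mult u v + G.nm u ({u, v} : Finset V)ᶜ := by
      rw [degree_split (by simp : u ∈ ({u, v} : Finset V)), heu, nm, Finset.sum_singleton]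
    have hdv : G.degree v = G.mult v u + G.nm v ({u, v} : Finset V)ᶜ := by
      rw [degree_split (by simp : v ∈ ({u, v} : Finset V)), hev, nm, Finset.sum_singleton]
    have hcut : G.cut {u, v} = G.nm u ({u, v} : Finset V)ᶜ + G.nm v ({u, v} : Finset V)ᶜ := by
      rw [cut_eq, Finset.sum_pair huv]
    have hξ := minEdgeDegree_le hadj
    have hsym : G.mult v u = G.mult u v := G.symm v u
    have hlam : G.cut {u, v} = G.rEdgeConn := hA.2
    omega

lemma atom_two_nbrs (hG : G.Connected) (hδ : 2 * G.maxMult ≤ G.minDegree)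
    (hopt : G.rEdgeConn < G.minEdgeDegree) {A : Finset V} (hA : G.IsRAtom A) :
    ∀ u ∈ A, ∀ x ∈ A, x ≠ u → ∃ v ∈ A, v ≠ u ∧ G.Adj x v := by
  have h3 : 3 ≤ A.card := rfrag_card3 hG hopt hA.1
  obtain ⟨hne, hcne, hin, hout⟩ := (restricted_boundary_iff hG A).mp hA.1.1
  by_contra hcon
  push_neg at hcon
  obtain ⟨u, hu, x, hx, hxu, honly⟩ := hcon
  -- every A-neighbor of x is u
  have honly' : ∀ v ∈ A, G.Adj x v → v = u := by
    intro v hv hadj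
    by_contra hne'
    exact absurd hadj (honly v hv hne')
  obtain ⟨v0, hv0, hadj0⟩ := hin x hx
  have hv0u := honly' v0 hv0 hadj0
  have hadjxu : G.Adj x u := by rwa [hv0u] at hadj0
  have hxuA : u ∈ A.erase x := Finset.mem_erase.mpr ⟨Ne.symm hxu, hu⟩
  have hnmx : G.nm x (A.erase x) = G.mult x u := by
    rw [nm]
    refine Finset.sum_eq_single_of_mem u hxuA ?_
    intro v hv hvu
    have hvA := Finset.mem_erase.mp hv
    by_contra hmz
    exact hvu (honly' v hvA.2 (Nat.pos_of_ne_zero hmz))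
  have hdx : G.degree x = G.mult x u + G.nm x Aᶜ := by
    rw [degree_split hx, hnmx]
  have hmax : G.mult x u ≤ G.maxMult := mult_le_maxMult x u
  have hmin : G.minDegree ≤ G.degree x := minDegree_le x
  have hxAc : 1 ≤ G.nm x Aᶜ := by
    have : 0 < G.mult x u := hadjxu
    omega
  by_cases hucase : ∃ v ∈ A, v ≠ x ∧ G.Adj u v
  · -- strict erase argument at x
    obtain ⟨v', hv', hvx', hadjv'⟩ := hucase
    have hres : G.IsRestrictedEdgeCut (G.boundary (A.erase x)) := by
      rw [restricted_boundary_iff hG]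
      refine ⟨⟨u, hxuA⟩, ⟨x, by simp⟩, ?_, ?_⟩
      · intro v hv
        obtain ⟨hvx, hvA⟩ := Finset.mem_erase.mp hv
        obtain ⟨t, ht, hadjt⟩ := hin v hvA
        by_cases htx : t = x
        · subst htx
          have hxv : G.Adj t v := by
            show 0 < G.mult t v
            rw [G.symm t v]
            exact hadjt
          have hvu : v = u := honly' v hvA hxv
          subst hvu
          exact ⟨v', Finset.mem_erase.mpr ⟨hvx', hv'⟩, hadjv'⟩
        · exact ⟨t, Finset.mem_erase.mpr ⟨htx, ht⟩, hadjt⟩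
      · intro v hv
        by_cases hvx : v = x
        · subst hvx
          obtain ⟨t, ht, hadjt⟩ := exists_adj_of_nm_pos (by omega : 0 < G.nm v Aᶜ)
          have htA : t ∉ A := Finset.mem_compl.mp ht
          exact ⟨t, fun htm => htA (Finset.mem_of_mem_erase htm), hadjt⟩
        · have hvA : v ∉ A := fun hvA => hv (Finset.mem_erase.mpr ⟨hvx, hvA⟩)
          obtain ⟨t, ht, hadjt⟩ := hout v hvA
          exact ⟨t, fun htm => ht (Finset.mem_of_mem_erase htm), hadjt⟩
    have hstrict := atom_strict hA hres (Finset.card_erase_lt_of_mem hx)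
    have hce := cut_erase (G := G) hx
    rw [hnmx] at hce
    omega
  · -- u's A-neighbors are only x: ξ contradiction
    push_neg at hucase
    have honlyu : ∀ v ∈ A, G.Adj u v → v = x := by
      intro v hv hadj
      by_contra hne'
      exact absurd hadj (hucase v hv hne')
    have hxA' : x ∈ A.erase u := Finset.mem_erase.mpr ⟨hxu, hx⟩
    have hadjux : G.Adj u x := by
      show 0 < G.mult u x
      rw [G.symm u x]
      exact hadjxu
    have hnmu : G.nm u (A.erase u) = G.mult u x := by
      rw [nm]
      refine Finset.sum_eq_single_of_mem x hxA' ?_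
      intro v hv hvx
      have hvA := Finset.mem_erase.mp hv
      by_contra hmz
      exact hvx (honlyu v hvA.2 (Nat.pos_of_ne_zero hmz))
    have hdu : G.degree u = G.mult u x + G.nm u Aᶜ := by
      rw [degree_split hu, hnmu]
    have hcutge : G.nm x Aᶜ + G.nm u Aᶜ ≤ G.cut A := by
      rw [cut_eq, ← Finset.sum_erase_add A _ hx]
      have : G.nm u Aᶜ ≤ ∑ w ∈ A.erase x, G.nm w Aᶜ :=
        Finset.single_le_sum (f := fun w => G.nm w Aᶜ) (fun _ _ => Nat.zero_le _) hxuA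
      omega
    have hξ := minEdgeDegree_le hadjxu
    have hsym : G.mult u x = G.mult x u := G.symm u x
    have hlam : G.cut A = G.rEdgeConn := hA.1.2
    omega

lemma step (hG : G.Connected) (hδ : 2 * G.maxMult ≤ G.minDegree)
    (hopt : G.rEdgeConn < G.minEdgeDegree) {A B : Finset V}
    (hA : G.IsRAtom A) (hB : G.IsRAtom B) {w : V} (hwA : w ∈ A) (hwB : w ∉ B)
    (hbad : ∀ v, v ∈ A → v ∉ B → ¬ G.Adj w v) :
    ∀ x, x ∉ B → x ≠ w → ∀ v, v ∉ B → v ≠ w → G.mult x v = 0 := by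
  classical
  obtain ⟨hAne, hAcne, hAin, hAout⟩ := (restricted_boundary_iff hG A).mp hA.1.1
  obtain ⟨hBne, hBcne, hBin, hBout⟩ := (restricted_boundary_iff hG B).mp hB.1.1
  have hA3 : 3 ≤ A.card := rfrag_card3 hG hopt hA.1
  have T3A := atom_two_nbrs hG hδ hopt hA
  have hbad0 : ∀ v, v ∈ A → v ∉ B → G.mult w v = 0 := fun v h1 h2 =>
    Nat.le_zero.mp (not_lt.mp (hbad v h1 h2))
  obtain ⟨u0, hu0B, hadju0⟩ := hBout w hwB
  have hu0A : u0 ∉ A := fun h => hbad u0 h hu0B hadju0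
  have hres : G.IsRestrictedEdgeCut (G.boundary (A.erase w)) := by
    rw [restricted_boundary_iff hG]
    refine ⟨?_, ⟨w, by simp⟩, ?_, ?_⟩
    · rw [← Finset.card_pos, Finset.card_erase_of_mem hwA]; omega
    · intro x hx
      obtain ⟨hxw, hxA⟩ := Finset.mem_erase.mp hx
      obtain ⟨v, hv, hvw, hadj⟩ := T3A w hwA x hxA hxw
      exact ⟨v, Finset.mem_erase.mpr ⟨hvw, hv⟩, hadj⟩
    · intro v hv
      by_cases hvw : v = w
      · subst hvw
        exact ⟨u0, fun h => hu0A (Finset.mem_of_mem_erase h), hadju0⟩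
      · have hvA : v ∉ A := fun h => hv (Finset.mem_erase.mpr ⟨hvw, h⟩)
        obtain ⟨t, ht, hadj⟩ := hAout v hvA
        exact ⟨t, fun h => ht (Finset.mem_of_mem_erase h), hadj⟩
  have hstrict := atom_strict hA hres (Finset.card_erase_lt_of_mem hwA)
  have hce := cut_erase (G := G) hwA
  have hkey1 : G.nm w Aᶜ + 1 ≤ G.nm w (A.erase w) := by omega
  have hAeB : G.nm w (A.erase w) ≤ G.nm w B :=
    nm_le_of_support (fun v hv hvB => hbad0 v (Finset.mem_of_mem_erase hv) hvB)
  have hkeyB : G.nm w Aᶜ + 1 ≤ G.nm w B := le_trans hkey1 hAeB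
  by_contra hcon
  push_neg at hcon
  obtain ⟨x₀, hx₀B, hx₀w, v₀, hv₀B, hv₀w, hm₀⟩ := hcon
  set S : Finset V :=
    Finset.univ.filter (fun x => x ∉ B ∧ x ≠ w ∧ ∀ v, v ∉ B → v ≠ w → G.mult x v = 0)
    with hSdef
  have hSmem : ∀ x : V, x ∈ S ↔ (x ∉ B ∧ x ≠ w ∧ ∀ v, v ∉ B → v ≠ w → G.mult x v = 0) := by
    intro x; simp [hSdef]
  set T : Finset V := insert w B ∪ S with hTdef
  have hTmem : ∀ x : V, x ∈ T ↔ (x = w ∨ x ∈ B ∨ x ∈ S) := by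
    intro x; simp [hTdef, Finset.mem_union, Finset.mem_insert, or_assoc]
  have hTc : ∀ x : V, x ∉ T ↔ (x ∉ B ∧ x ≠ w ∧ x ∉ S) := by
    intro x; rw [hTmem x]; tauto
  have hx₀T : x₀ ∉ T := by
    rw [hTc]
    exact ⟨hx₀B, hx₀w, fun hS => hm₀ (((hSmem x₀).mp hS).2.2 v₀ hv₀B hv₀w)⟩
  have hresT : G.IsRestrictedEdgeCut (G.boundary T) := by
    rw [restricted_boundary_iff hG]
    refine ⟨⟨w, (hTmem w).mpr (Or.inl rfl)⟩, ⟨x₀, Finset.mem_compl.mpr hx₀T⟩, ?_, ?_⟩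
    · intro t ht
      rcases (hTmem t).mp ht with rfl | htB | htS
      · obtain ⟨v, hv, hadj⟩ := exists_adj_of_nm_pos (show 0 < G.nm t B by omega)
        exact ⟨v, (hTmem v).mpr (Or.inr (Or.inl hv)), hadj⟩
      · obtain ⟨v, hv, hadj⟩ := hBin t htB
        exact ⟨v, (hTmem v).mpr (Or.inr (Or.inl hv)), hadj⟩
      · obtain ⟨hB', hw', hzero⟩ := (hSmem t).mp htS
        obtain ⟨r, hr, hadj⟩ := hBout t hB'
        have hrw : r = w := by
          by_contra hne
          exact absurd hadj (by simp [Adj, hzero r hr hne])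
        exact ⟨r, (hTmem r).mpr (Or.inl hrw), hadj⟩
    · intro v hv
      rw [hTc] at hv
      obtain ⟨hvB, hvw, hvS⟩ := hv
      have hnall : ¬ (∀ u, u ∉ B → u ≠ w → G.mult v u = 0) := fun hall =>
        hvS ((hSmem v).mpr ⟨hvB, hvw, hall⟩)
      push_neg at hnall
      obtain ⟨u, huB, huw, hmu⟩ := hnall
      have huS : u ∉ S := fun hS =>
        hmu (by rw [G.symm]; exact ((hSmem u).mp hS).2.2 v hvB hvw)
      refine ⟨u, ?_, Nat.pos_of_ne_zero hmu⟩
      intro h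
      rcases (hTmem u).mp h with rfl | h | h
      exacts [huw rfl, huB h, huS h]
  have hlamT : G.rEdgeConn ≤ G.cut T := rEdgeConn_le_cut hresT
  have hdisjS : Disjoint (insert w B) S := by
    rw [Finset.disjoint_left]
    intro a ha hs
    obtain ⟨haB, haw, _⟩ := (hSmem a).mp hs
    rcases Finset.mem_insert.mp ha with rfl | h
    exacts [haw rfl, haB h]
  have hcutT : G.cut T ≤ G.cut (insert w B) := by
    rw [cut_eq, cut_eq]
    have hsub : Tᶜ ⊆ (insert w B)ᶜ :=
      Finset.compl_subset_compl.mpr (hTdef ▸ Finset.subset_union_left)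
    have h1 : ∀ t ∈ T, G.nm t Tᶜ ≤ G.nm t (insert w B)ᶜ := fun t _ =>
      Finset.sum_le_sum_of_subset hsub
    calc ∑ t ∈ T, G.nm t Tᶜ ≤ ∑ t ∈ T, G.nm t (insert w B)ᶜ := Finset.sum_le_sum h1
      _ = (∑ t ∈ insert w B, G.nm t (insert w B)ᶜ) + ∑ t ∈ S, G.nm t (insert w B)ᶜ := by
          rw [hTdef, Finset.sum_union hdisjS]
      _ = ∑ t ∈ insert w B, G.nm t (insert w B)ᶜ := by
          have : ∀ t ∈ S, G.nm t (insert w B)ᶜ = 0 := by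
            intro t ht
            obtain ⟨htB, htw, hzero⟩ := (hSmem t).mp ht
            refine Finset.sum_eq_zero fun v hv => ?_
            rw [Finset.mem_compl, Finset.mem_insert] at hv
            push_neg at hv
            exact hzero v hv.2 hv.1
          rw [Finset.sum_eq_zero this, add_zero]
  have hci := cut_insert (G := G) hwB
  have hBc_le : G.nm w (Bᶜ.erase w) ≤ G.nm w Aᶜ := by
    refine nm_le_of_support fun v hv hvAc => ?_
    obtain ⟨hvw, hvB⟩ := Finset.mem_erase.mp hv
    rw [Finset.mem_compl, not_not] at hvAc
    exact hbad0 v hvAc (Finset.mem_compl.mp hvB)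
  have hcutB : G.cut B = G.rEdgeConn := hB.1.2
  omega

lemma eqn {X Yf : Finset V} {w z y : V}
    (hwX : w ∉ X) (hzX : z ∉ X) (hwz : w ≠ z) (hyY : y ∈ Yf) (hwY : w ∉ Yf) (hzY : z ∉ Yf)
    (hXY : ∀ v ∈ X, v ∉ Yf)
    (huniv : ∀ v : V, v ∈ X ∨ v = w ∨ v = z ∨ v ∈ Yf)
    (hy0 : ∀ v ∈ Yf, G.mult y v = 0) :
    G.cut (insert z X) + G.nm w (Yf.erase y) + 2 * G.mult y w
      = G.degree y + G.degree w + (∑ u ∈ X, G.nm u (Yf.erase y)) + G.nm z (Yf.erase y) := by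
  have hcompl : (insert z X)ᶜ = insert w Yf := by
    ext v
    simp only [Finset.mem_compl, Finset.mem_insert]
    constructor
    · intro hv
      push_neg at hv
      rcases huniv v with h | h | h | h
      · exact absurd h hv.2
      · exact Or.inl h
      · exact absurd h hv.1
      · exact Or.inr h
    · rintro (rfl | hv) h
      · rcases h with h | h
        exacts [hwz h, hwX h]
      · rcases h with rfl | h
        exacts [hzY hv, hXY v h hv]
  have hnmins : ∀ u : V, G.nm u (insert w Yf) = G.mult u w + (G.mult u y + G.nm u (Yf.erase y)) := by
    intro u
    rw [nm, Finset.sum_insert hwY, ← Finset.sum_erase_add Yf _ hyY, nm]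
    omega
  have hcut : G.cut (insert z X) = (G.mult z w + (G.mult z y + G.nm z (Yf.erase y)))
      + ((∑ u ∈ X, G.mult u w) + ((∑ u ∈ X, G.mult u y) + ∑ u ∈ X, G.nm u (Yf.erase y))) := by
    rw [cut_eq, hcompl, Finset.sum_insert hzX, hnmins]
    congr 1
    rw [Finset.sum_congr rfl (fun u _ => hnmins u), Finset.sum_add_distrib, Finset.sum_add_distrib]
  have hwmem : w ∉ insert z (X ∪ Yf) := by
    simp only [Finset.mem_insert, Finset.mem_union]
    push_neg
    exact ⟨hwz, hwX, hwY⟩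
  have hzmem : z ∉ X ∪ Yf := by
    simp only [Finset.mem_union]
    push_neg
    exact ⟨hzX, hzY⟩
  have huniv' : (Finset.univ : Finset V) = insert w (insert z (X ∪ Yf)) := by
    ext v
    simp only [Finset.mem_univ, true_iff, Finset.mem_insert, Finset.mem_union]
    rcases huniv v with h | h | h | h <;> tauto
  have hdisj : Disjoint X Yf := Finset.disjoint_left.mpr (fun a ha => hXY a ha)
  have hdy : G.degree y = G.mult y w + G.mult y z + ∑ u ∈ X, G.mult y u := by
    have h0 : ∑ v ∈ Yf, G.mult y v = 0 := Finset.sum_eq_zero hy0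
    rw [degree_eq, nm, huniv', Finset.sum_insert hwmem, Finset.sum_insert hzmem,
      Finset.sum_union hdisj]
    omega
  have hdw : G.degree w = G.mult w z + (∑ u ∈ X, G.mult w u)
      + (G.mult w y + G.nm w (Yf.erase y)) := by
    have h1 : ∑ v ∈ Yf, G.mult w v = G.mult w y + G.nm w (Yf.erase y) := by
      rw [← Finset.sum_erase_add Yf _ hyY, nm]
      omega
    have h2 : G.mult w w = 0 := G.loopless w
    rw [degree_eq, nm, huniv', Finset.sum_insert hwmem, Finset.sum_insert hzmem,
      Finset.sum_union hdisj]
    omega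
  have s1 : ∑ u ∈ X, G.mult u w = ∑ u ∈ X, G.mult w u :=
    Finset.sum_congr rfl fun u _ => G.symm u w
  have s2 : ∑ u ∈ X, G.mult u y = ∑ u ∈ X, G.mult y u :=
    Finset.sum_congr rfl fun u _ => G.symm u y
  have s3 : G.mult z w = G.mult w z := G.symm z w
  have s4 : G.mult z y = G.mult y z := G.symm z y
  have s5 : G.mult w y = G.mult y w := G.symm w y
  omega

lemma final (hG : G.Connected) (hδ : 2 * G.maxMult ≤ G.minDegree)
    (hopt : G.rEdgeConn < G.minEdgeDegree) {A B : Finset V}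
    (hA : G.IsRAtom A) (hB : G.IsRAtom B) (hcard : A.card = B.card)
    {w : V} (hwA : w ∈ A) (hwB : w ∉ B)
    (hbad : ∀ v, v ∈ A → v ∉ B → ¬ G.Adj w v) : False := by
  obtain ⟨hAne, hAcne, hAin, hAout⟩ := (restricted_boundary_iff hG A).mp hA.1.1
  obtain ⟨hBne, hBcne, hBin, hBout⟩ := (restricted_boundary_iff hG B).mp hB.1.1
  have hA3 : 3 ≤ A.card := rfrag_card3 hG hopt hA.1
  have concl1 := step hG hδ hopt hA hB hwA hwB hbad
  -- A \ B = {w}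
  have hW : A \ B = {w} := by
    apply Finset.eq_singleton_iff_unique_mem.mpr
    refine ⟨Finset.mem_sdiff.mpr ⟨hwA, hwB⟩, ?_⟩
    intro x hx
    obtain ⟨hxA, hxB⟩ := Finset.mem_sdiff.mp hx
    by_contra hxw
    obtain ⟨u, huB, hadj⟩ := hBout x hxB
    have hxwm : G.mult x w = 0 := by
      rw [G.symm]
      exact Nat.le_zero.mp (not_lt.mp (hbad x hxA hxB))
    have huw : u ≠ w := by
      rintro rfl
      exact absurd hadj (by simp [Adj, hxwm])
    exact absurd hadj (by simp [Adj, concl1 x hxB hxw u huB huw])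
  have hZ1 : (B \ A).card = 1 := by
    have h1 : (A \ B).card + (A ∩ B).card = A.card := Finset.card_sdiff_add_card_inter A B
    have h2 : (B \ A).card + (B ∩ A).card = B.card := Finset.card_sdiff_add_card_inter B A
    have h3 : (A ∩ B).card = (B ∩ A).card := by rw [Finset.inter_comm]
    have h4 : (A \ B).card = 1 := by rw [hW]; simp
    omega
  obtain ⟨z, hZ⟩ := Finset.card_eq_one.mp hZ1
  have hzB : z ∈ B := (Finset.mem_sdiff.mp (hZ ▸ Finset.mem_singleton_self z)).1
  have hzA : z ∉ A := (Finset.mem_sdiff.mp (hZ ▸ Finset.mem_singleton_self z)).2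
  have hzbad : ∀ v, v ∈ B → v ∉ A → ¬ G.Adj z v := by
    intro v hvB hvA hadj
    have : v = z := by
      have : v ∈ B \ A := Finset.mem_sdiff.mpr ⟨hvB, hvA⟩
      rw [hZ] at this
      exact Finset.mem_singleton.mp this
    subst this
    exact absurd hadj (by simp [Adj, G.loopless])
  have concl2 := step hG hδ hopt hB hA hzB hzA hzbad
  -- a vertex outside A ∪ B
  have hAcc : A.card ≤ Aᶜ.card := hA.2 Aᶜ (rfrag_compl hG hA.1)
  obtain ⟨y, hyA, hyB⟩ : ∃ y, y ∉ A ∧ y ∉ B := by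
    have h1 : (B \ A).card + A.card = (B ∪ A).card := Finset.card_sdiff_add_card B A
    have h2 : A.card + Aᶜ.card = Fintype.card V := Finset.card_add_card_compl A
    have h3 : (A ∪ B).card + (A ∪ B)ᶜ.card = Fintype.card V := by
      rw [add_comm]; exact Finset.card_compl_add_card (A ∪ B)
    have h4 : (A ∪ B).card = (B ∪ A).card := by rw [Finset.union_comm]
    have h5 : 0 < (A ∪ B)ᶜ.card := by omega
    obtain ⟨y, hy⟩ := Finset.card_pos.mp h5
    rw [Finset.mem_compl, Finset.mem_union] at hy
    push_neg at hy
    exact ⟨y, hy.1, hy.2⟩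
  have hwz : w ≠ z := fun h => hzA (h ▸ hwA)
  have hyw : y ≠ w := fun h => hyA (h ▸ hwA)
  have hyz : y ≠ z := fun h => hyB (h ▸ hzB)
  -- X and Y
  set X : Finset V := A ∩ B with hXdef
  set Yf : Finset V := (A ∪ B)ᶜ with hYdef
  have hwX : w ∉ X := fun h => hwB (Finset.mem_inter.mp h).2
  have hzX : z ∉ X := fun h => hzA (Finset.mem_inter.mp h).1
  have hyY : y ∈ Yf := by
    rw [hYdef, Finset.mem_compl, Finset.mem_union]
    push_neg
    exact ⟨hyA, hyB⟩
  have hwY : w ∉ Yf := by simp [hYdef, hwA]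
  have hzY : z ∉ Yf := by simp [hYdef, hzB]
  have hXY : ∀ v ∈ X, v ∉ Yf := by
    intro v hv
    simp [hYdef, (Finset.mem_inter.mp hv).1]
  have huniv : ∀ v : V, v ∈ X ∨ v = w ∨ v = z ∨ v ∈ Yf := by
    intro v
    by_cases hvA : v ∈ A <;> by_cases hvB : v ∈ B
    · exact Or.inl (Finset.mem_inter.mpr ⟨hvA, hvB⟩)
    · refine Or.inr (Or.inl ?_)
      have : v ∈ A \ B := Finset.mem_sdiff.mpr ⟨hvA, hvB⟩
      rw [hW] at this
      exact Finset.mem_singleton.mp this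
    · refine Or.inr (Or.inr (Or.inl ?_))
      have : v ∈ B \ A := Finset.mem_sdiff.mpr ⟨hvB, hvA⟩
      rw [hZ] at this
      exact Finset.mem_singleton.mp this
    · refine Or.inr (Or.inr (Or.inr ?_))
      rw [hYdef, Finset.mem_compl, Finset.mem_union]
      push_neg
      exact ⟨hvA, hvB⟩
  have hy0 : ∀ v ∈ Yf, G.mult y v = 0 := by
    intro v hv
    rw [hYdef, Finset.mem_compl, Finset.mem_union] at hv
    push_neg at hv
    by_cases hvy : v = y
    · subst hvy; exact G.loopless v
    · have hvw : v ≠ w := fun h => hv.1 (h ▸ hwA)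
      exact concl1 y hyB hyw v hv.2 hvw
  have hA_eq : A = insert w X := by
    ext a
    rw [Finset.mem_insert, hXdef, Finset.mem_inter]
    constructor
    · intro ha
      by_cases haB : a ∈ B
      · exact Or.inr ⟨ha, haB⟩
      · left
        have : a ∈ A \ B := Finset.mem_sdiff.mpr ⟨ha, haB⟩
        rw [hW] at this
        exact Finset.mem_singleton.mp this
    · rintro (rfl | ⟨h, _⟩)
      exacts [hwA, h]
  have hB_eq : B = insert z X := by
    ext a
    rw [Finset.mem_insert, hXdef, Finset.mem_inter]
    constructor
    · intro ha
      by_cases haA : a ∈ A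
      · exact Or.inr ⟨haA, ha⟩
      · left
        have : a ∈ B \ A := Finset.mem_sdiff.mpr ⟨ha, haA⟩
        rw [hZ] at this
        exact Finset.mem_singleton.mp this
    · rintro (rfl | ⟨_, h⟩)
      exacts [hzB, h]
  have hadjyw : G.Adj y w := by
    obtain ⟨u, huB, hadj⟩ := hBout y hyB
    have : u = w := by
      by_contra hne
      exact absurd hadj (by simp [Adj, concl1 y hyB hyw u huB hne])
    exact this ▸ hadj
  have hadjyz : G.Adj y z := by
    obtain ⟨u, huA, hadj⟩ := hAout y hyA
    have : u = z := by
      by_contra hne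
      exact absurd hadj (by simp [Adj, concl2 y hyA hyz u huA hne])
    exact this ▸ hadj
  have huniv2 : ∀ v : V, v ∈ X ∨ v = z ∨ v = w ∨ v ∈ Yf := by
    intro v
    rcases huniv v with h | h | h | h <;> tauto
  have eq1 := eqn (G := G) hwX hzX hwz hyY hwY hzY hXY huniv hy0
  have eq2 := eqn (G := G) hzX hwX (Ne.symm hwz) hyY hzY hwY hXY huniv2 hy0
  have hcutB : G.cut (insert z X) = G.rEdgeConn := by rw [← hB_eq]; exact hB.1.2
  have hcutA : G.cut (insert w X) = G.rEdgeConn := by rw [← hA_eq]; exact hA.1.2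
  have hxi1 := minEdgeDegree_le hadjyw
  have hxi2 := minEdgeDegree_le hadjyz
  omega

end Multigraph



/-- In a connected half-transitive multigraph with `δ(G) ≥ 2μ(G)` which is not `λ'`-optimal,
any two distinct `λ'`-atoms `A`, `B` satisfy `|A| = |B| ≥ 3` and `A ∩ B = ∅`. -/
theorem rAtoms_disjoint (G : Multigraph V) (V₁ V₂ : Finset V)
    (hG : G.Connected) (hht : G.IsHalfTransitive V₁ V₂)
    (hδ : 2 * G.maxMult ≤ G.minDegree)
    (hopt : G.rEdgeConn < G.minEdgeDegree)
    (A B : Finset V) (hA : G.IsRAtom A) (hB : G.IsRAtom B) (hAB : A ≠ B) :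
    A.card = B.card ∧ 3 ≤ A.card ∧ Disjoint A B := by
  have hcard : A.card = B.card := le_antisymm (hA.2 B hB.1) (hB.2 A hA.1)
  have h3 : 3 ≤ A.card := rfrag_card3 hG hopt hA.1
  refine ⟨hcard, h3, ?_⟩
  by_contra hdisj
  obtain ⟨x₀, hx₀A, hx₀B⟩ := Finset.not_disjoint_iff.mp hdisj
  obtain ⟨hAne, hAcne, hAin, hAout⟩ := (restricted_boundary_iff hG A).mp hA.1.1
  obtain ⟨hBne, hBcne, hBin, hBout⟩ := (restricted_boundary_iff hG B).mp hB.1.1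
  by_cases hPW : ∀ w ∈ A \ B, ∃ v ∈ A \ B, G.Adj w v
  · by_cases hPZ : ∀ w ∈ B \ A, ∃ v ∈ B \ A, G.Adj w v
    · -- all good: submodularity contradiction
      have hWne : (A \ B).Nonempty := by
        rw [Finset.sdiff_nonempty]
        intro hsub
        exact hAB (Finset.eq_of_subset_of_card_le hsub (le_of_eq hcard.symm))
      have hZne : (B \ A).Nonempty := by
        rw [Finset.sdiff_nonempty]
        intro hsub
        exact hAB (Finset.eq_of_subset_of_card_le hsub (le_of_eq hcard)).symm
      have hresW : G.IsRestrictedEdgeCut (G.boundary (A \ B)) := by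
        rw [restricted_boundary_iff hG]
        refine ⟨hWne, ⟨x₀, by simp [hx₀B]⟩, hPW, ?_⟩
        intro v hv
        by_cases hvB : v ∈ B
        · obtain ⟨u, hu, hadj⟩ := hBin v hvB
          exact ⟨u, by simp [hu], hadj⟩
        · have hvA : v ∉ A := fun h => hv (Finset.mem_sdiff.mpr ⟨h, hvB⟩)
          obtain ⟨u, hu, hadj⟩ := hAout v hvA
          exact ⟨u, fun h => hu (Finset.mem_sdiff.mp h).1, hadj⟩
      have hresZ : G.IsRestrictedEdgeCut (G.boundary (B \ A)) := by
        rw [restricted_boundary_iff hG]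
        refine ⟨hZne, ⟨x₀, by simp [hx₀A]⟩, hPZ, ?_⟩
        intro v hv
        by_cases hvA : v ∈ A
        · obtain ⟨u, hu, hadj⟩ := hAin v hvA
          exact ⟨u, by simp [hu], hadj⟩
        · have hvB : v ∉ B := fun h => hv (Finset.mem_sdiff.mpr ⟨h, hvA⟩)
          obtain ⟨u, hu, hadj⟩ := hBout v hvB
          exact ⟨u, fun h => hu (Finset.mem_sdiff.mp h).1, hadj⟩
      have hWcard : (A \ B).card < A.card :=
        Finset.card_lt_card ((Finset.ssubset_iff_of_subset Finset.sdiff_subset).mpr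
          ⟨x₀, hx₀A, fun h => (Finset.mem_sdiff.mp h).2 hx₀B⟩)
      have hZcard : (B \ A).card < B.card :=
        Finset.card_lt_card ((Finset.ssubset_iff_of_subset Finset.sdiff_subset).mpr
          ⟨x₀, hx₀B, fun h => (Finset.mem_sdiff.mp h).2 hx₀A⟩)
      have h1 : G.cut A + 1 ≤ G.cut (A \ B) := atom_strict hA hresW hWcard
      have h2 : G.cut B + 1 ≤ G.cut (B \ A) := atom_strict hB hresZ hZcard
      have h3' := submod (G := G) A B
      have h4 : G.cut A = G.rEdgeConn := hA.1.2
      have h5 : G.cut B = G.rEdgeConn := hB.1.2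
      omega
    · push_neg at hPZ
      obtain ⟨z, hz, hzbad⟩ := hPZ
      obtain ⟨hzB, hzA⟩ := Finset.mem_sdiff.mp hz
      exact final hG hδ hopt hB hA hcard.symm hzB hzA
        (fun v hvB hvA => hzbad v (Finset.mem_sdiff.mpr ⟨hvB, hvA⟩))
  · push_neg at hPW
    obtain ⟨w, hw, hwbad⟩ := hPW
    obtain ⟨hwA, hwB⟩ := Finset.mem_sdiff.mp hw
    exact final hG hδ hopt hA hB hcard hwA hwB
      (fun v hvA hvB => hwbad v (Finset.mem_sdiff.mpr ⟨hvA, hvB⟩))
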